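/- Let M and A be disjoint antichains in 2^{[n]} with [n] ∉ M, such that each A ∈ A is properly contained in a unique f(A) ∈ M. Then Σ_{M∈M} |M|!(n−|M|)! + Σ_{A∈A} |A|!(n−|A|)! ≤ n! + Σ_{A∈A} |A|!·(|f(A)|−|A|)!·(n−|f(A)|)!. -/

import Mathlib

open Finset

namespace Stmt16
variable {α : Type*} [DecidableEq α] [Fintype α]

section glue
variable {p₁ p₂ q₁ q₂ : α → Prop} [DecidablePred p₁] [DecidablePred p₂]
  [DecidablePred q₁] [DecidablePred q₂]

/-- glue three partial bijections into a function. -/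
def glue (e₁ : {x // p₁ x} ≃ {x // q₁ x}) (e₂ : {x // p₂ x ∧ ¬ p₁ x} ≃ {x // q₂ x ∧ ¬ q₁ x})
    (e₃ : {x // ¬ p₂ x} ≃ {x // ¬ q₂ x}) : α → α :=
  fun x => if h : p₁ x then (e₁ ⟨x, h⟩).1
    else if h2 : p₂ x then (e₂ ⟨x, ⟨h2, h⟩⟩).1 else (e₃ ⟨x, h2⟩).1

omit [DecidableEq α] [Fintype α] in
theorem glue_leftInverse (hq : ∀ x, q₁ x → q₂ x)
    (e₁ : {x // p₁ x} ≃ {x // q₁ x}) (e₂ : {x // p₂ x ∧ ¬ p₁ x} ≃ {x // q₂ x ∧ ¬ q₁ x})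
    (e₃ : {x // ¬ p₂ x} ≃ {x // ¬ q₂ x}) :
    Function.LeftInverse (glue e₁.symm e₂.symm e₃.symm) (glue e₁ e₂ e₃) := by
  intro x
  by_cases h : p₁ x
  · have hy := (e₁ ⟨x, h⟩).2
    simp [glue, h, hy, hq _ hy]
  · by_cases h2 : p₂ x
    · have hy := (e₂ ⟨x, ⟨h2, h⟩⟩).2
      simp [glue, h, h2, hy.1, hy.2]
    · have hy := (e₃ ⟨x, h2⟩).2
      have hy1 : ¬ q₁ (e₃ ⟨x, h2⟩).1 := fun hc => hy (hq _ hc)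
      simp [glue, h, h2, hy, hy1]

/-- The permutation glued from three partial bijections. -/
def gluePerm (hp : ∀ x, p₁ x → p₂ x) (hq : ∀ x, q₁ x → q₂ x)
    (e₁ : {x // p₁ x} ≃ {x // q₁ x}) (e₂ : {x // p₂ x ∧ ¬ p₁ x} ≃ {x // q₂ x ∧ ¬ q₁ x})
    (e₃ : {x // ¬ p₂ x} ≃ {x // ¬ q₂ x}) : Equiv.Perm α where
  toFun := glue e₁ e₂ e₃
  invFun := glue e₁.symm e₂.symm e₃.symm
  left_inv := glue_leftInverse hq e₁ e₂ e₃
  right_inv := by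
    have := glue_leftInverse (p₁ := q₁) (p₂ := q₂) hp e₁.symm e₂.symm e₃.symm
    simp only [Equiv.symm_symm] at this
    exact this

omit [DecidableEq α] [Fintype α] in
theorem gluePerm_spec (hp : ∀ x, p₁ x → p₂ x) (hq : ∀ x, q₁ x → q₂ x)
    (e₁ : {x // p₁ x} ≃ {x // q₁ x}) (e₂ : {x // p₂ x ∧ ¬ p₁ x} ≃ {x // q₂ x ∧ ¬ q₁ x})
    (e₃ : {x // ¬ p₂ x} ≃ {x // ¬ q₂ x}) (x : α) :
    (p₁ x ↔ q₁ (gluePerm hp hq e₁ e₂ e₃ x)) ∧ (p₂ x ↔ q₂ (gluePerm hp hq e₁ e₂ e₃ x)) := by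
  by_cases h : p₁ x
  · have hy := (e₁ ⟨x, h⟩).2
    simp [gluePerm, glue, h, hy, hq _ hy, hp _ h]
  · by_cases h2 : p₂ x
    · have hy := (e₂ ⟨x, ⟨h2, h⟩⟩).2
      simp [gluePerm, glue, h, h2, hy.1, hy.2]
    · have hy := (e₃ ⟨x, h2⟩).2
      have hy1 : ¬ q₁ (e₃ ⟨x, h2⟩).1 := fun hc => hy (hq _ hc)
      simp [gluePerm, glue, h, h2, hy, hy1, fun hc => hp x hc]

/-- Main decomposition equivalence: permutations matching a two-step flag. -/
def tripleEquiv (hp : ∀ x, p₁ x → p₂ x) (hq : ∀ x, q₁ x → q₂ x) :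
    {σ : Equiv.Perm α // (∀ x, p₁ x ↔ q₁ (σ x)) ∧ (∀ x, p₂ x ↔ q₂ (σ x))}
      ≃ ({x // p₁ x} ≃ {x // q₁ x}) × ({x // p₂ x ∧ ¬ p₁ x} ≃ {x // q₂ x ∧ ¬ q₁ x})
        × ({x // ¬ p₂ x} ≃ {x // ¬ q₂ x}) where
  toFun σ := ⟨σ.1.subtypeEquiv σ.2.1,
    σ.1.subtypeEquiv (fun x => and_congr (σ.2.2 x) (not_congr (σ.2.1 x))),
    σ.1.subtypeEquiv (fun x => not_congr (σ.2.2 x))⟩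
  invFun e := ⟨gluePerm hp hq e.1 e.2.1 e.2.2,
    fun x => (gluePerm_spec hp hq e.1 e.2.1 e.2.2 x).1,
    fun x => (gluePerm_spec hp hq e.1 e.2.1 e.2.2 x).2⟩
  left_inv := by
    rintro ⟨σ, h1, h2⟩
    ext x
    by_cases h : p₁ x
    · simp [gluePerm, glue, h, Equiv.subtypeEquiv]
    · by_cases hb : p₂ x <;> simp [gluePerm, glue, h, hb, Equiv.subtypeEquiv]
  right_inv := by
    rintro ⟨e₁, e₂, e₃⟩
    refine Prod.ext ?_ (Prod.ext ?_ ?_)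
    · ext ⟨x, hx⟩
      simp [gluePerm, glue, Equiv.subtypeEquiv, hx]
    · ext ⟨x, hx⟩
      simp [gluePerm, glue, Equiv.subtypeEquiv, hx.1, hx.2]
    · ext ⟨x, hx⟩
      have h1 : ¬ p₁ x := fun hc => hx (hp x hc)
      simp [gluePerm, glue, Equiv.subtypeEquiv, hx, h1]

end glue

def cardLtEquiv {n s : ℕ} (h : s ≤ n) : {x : Fin n // (x:ℕ) < s} ≃ Fin s where
  toFun x := ⟨x.1, x.2⟩
  invFun i := ⟨⟨i.1, lt_of_lt_of_le i.2 h⟩, i.2⟩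
  left_inv _ := rfl
  right_inv _ := rfl

def cardMidEquiv {n s t : ℕ} (ht : t ≤ n) :
    {x : Fin n // (x:ℕ) < t ∧ ¬ (x:ℕ) < s} ≃ Fin (t - s) where
  toFun x := ⟨x.1 - s, by omega⟩
  invFun i := ⟨⟨i.1 + s, by omega⟩, by constructor <;> simp <;> omega⟩
  left_inv x := by ext; simp; omega
  right_inv i := by ext; simp

def cardGeEquiv {n t : ℕ} (ht : t ≤ n) : {x : Fin n // ¬ (x:ℕ) < t} ≃ Fin (n - t) where
  toFun x := ⟨x.1 - t, by omega⟩
  invFun i := ⟨⟨i.1 + t, by omega⟩, by show ¬ _ ; simp⟩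
  left_inv x := by ext; simp; omega
  right_inv i := by ext; simp

theorem card_mid {n : ℕ} (S T : Finset (Fin n)) (hST : S ⊆ T) :
    Fintype.card {x : Fin n // x ∈ T ∧ x ∉ S} = T.card - S.card := by
  have e : {x : Fin n // x ∈ T ∧ x ∉ S} ≃ {x : Fin n // x ∈ T \ S} :=
    Equiv.subtypeEquivRight (by simp [Finset.mem_sdiff])
  rw [Fintype.card_congr e, Fintype.card_coe, Finset.card_sdiff_of_subset hST]

theorem card_notMem {n : ℕ} (T : Finset (Fin n)) :
    Fintype.card {x : Fin n // x ∉ T} = n - T.card := by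
  rw [Fintype.card_subtype_compl, Fintype.card_coe, Fintype.card_fin]

/-- `S` lies on the maximal chain determined by the permutation `σ`. -/
def onChain {n : ℕ} (σ : Equiv.Perm (Fin n)) (S : Finset (Fin n)) : Prop :=
  ∀ x : Fin n, (x:ℕ) < S.card ↔ σ x ∈ S

instance {n : ℕ} (σ : Equiv.Perm (Fin n)) (S : Finset (Fin n)) : Decidable (onChain σ S) :=
  Fintype.decidableForallFintype

theorem count_pair {n : ℕ} (S T : Finset (Fin n)) (hST : S ⊆ T) :
    (Finset.univ.filter fun σ : Equiv.Perm (Fin n) => onChain σ S ∧ onChain σ T).card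
    = S.card.factorial * ((T.card - S.card).factorial * (n - T.card).factorial) := by
  have hsn : S.card ≤ n := by simpa using Finset.card_le_card (Finset.subset_univ S)
  have htn : T.card ≤ n := by simpa using Finset.card_le_card (Finset.subset_univ T)
  have hst : S.card ≤ T.card := Finset.card_le_card hST
  rw [← Fintype.card_subtype]
  have e := tripleEquiv (α := Fin n) (p₁ := fun x => (x:ℕ) < S.card)
    (p₂ := fun x => (x:ℕ) < T.card) (q₁ := fun x => x ∈ S) (q₂ := fun x => x ∈ T)
    (fun x hx => lt_of_lt_of_le hx hst) (fun x hx => hST hx)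
  have e' : {σ : Equiv.Perm (Fin n) // onChain σ S ∧ onChain σ T}
      ≃ ({x : Fin n // (x:ℕ) < S.card} ≃ {x : Fin n // x ∈ S})
        × ({x : Fin n // (x:ℕ) < T.card ∧ ¬ (x:ℕ) < S.card} ≃ {x : Fin n // x ∈ T ∧ x ∉ S})
        × ({x : Fin n // ¬ (x:ℕ) < T.card} ≃ {x : Fin n // x ∉ T}) := e
  rw [Fintype.card_congr e', Fintype.card_prod, Fintype.card_prod]
  have c1 : Fintype.card {x : Fin n // (x:ℕ) < S.card} = S.card := by
    rw [Fintype.card_congr (cardLtEquiv hsn), Fintype.card_fin]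
  have d1 : Fintype.card {x : Fin n // x ∈ S} = S.card := Fintype.card_coe S
  have c2 : Fintype.card {x : Fin n // (x:ℕ) < T.card ∧ ¬ (x:ℕ) < S.card} = T.card - S.card := by
    rw [Fintype.card_congr (cardMidEquiv htn), Fintype.card_fin]
  have d2 := card_mid S T hST
  have c3 : Fintype.card {x : Fin n // ¬ (x:ℕ) < T.card} = n - T.card := by
    rw [Fintype.card_congr (cardGeEquiv htn), Fintype.card_fin]
  have d3 := card_notMem T
  rw [Fintype.card_equiv (Fintype.equivOfCardEq (c1.trans d1.symm)),
    Fintype.card_equiv (Fintype.equivOfCardEq (c2.trans d2.symm)),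
    Fintype.card_equiv (Fintype.equivOfCardEq (c3.trans d3.symm)), c1, c2, c3]

theorem count_single {n : ℕ} (S : Finset (Fin n)) :
    (Finset.univ.filter fun σ : Equiv.Perm (Fin n) => onChain σ S).card
    = S.card.factorial * (n - S.card).factorial := by
  have h := count_pair S S subset_rfl
  simp only [Nat.sub_self, Nat.factorial_zero, one_mul, and_self] at h
  exact h

theorem onChain_subset {n : ℕ} {σ : Equiv.Perm (Fin n)} {S T : Finset (Fin n)}
    (hS : onChain σ S) (hT : onChain σ T) (h : S.card ≤ T.card) : S ⊆ T := by
  intro y hy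
  have h1 : ((σ.symm y : Fin n) : ℕ) < S.card := (hS (σ.symm y)).2 (by simpa using hy)
  have h2 := (hT (σ.symm y)).1 (lt_of_lt_of_le h1 h)
  simpa using h2

theorem onChain_total {n : ℕ} {σ : Equiv.Perm (Fin n)} {S T : Finset (Fin n)}
    (hS : onChain σ S) (hT : onChain σ T) : S ⊆ T ∨ T ⊆ S := by
  rcases le_total S.card T.card with h | h
  · exact Or.inl (onChain_subset hS hT h)
  · exact Or.inr (onChain_subset hT hS h)

end Stmt16

open Stmt16 in
theorem stmt_16 (n : ℕ) (M A : Finset (Finset (Fin n)))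
    (hM : IsAntichain (· ⊆ ·) (M : Set (Finset (Fin n))))
    (hA : IsAntichain (· ⊆ ·) (A : Set (Finset (Fin n))))
    (hdisj : Disjoint M A)
    (hfull : (Finset.univ : Finset (Fin n)) ∉ M)
    (f : Finset (Fin n) → Finset (Fin n))
    (hf : ∀ S ∈ A, f S ∈ M ∧ S ⊂ f S ∧ ∀ T ∈ M, S ⊂ T → T = f S) :
    ∑ S ∈ M, S.card.factorial * (n - S.card).factorial
      + ∑ S ∈ A, S.card.factorial * (n - S.card).factorial
      ≤ n.factorial
        + ∑ S ∈ A, S.card.factorial * ((f S).card - S.card).factorial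
            * (n - (f S).card).factorial := by
  classical
  -- per-permutation inequality
  have key : ∀ σ : Equiv.Perm (Fin n),
      (M.filter fun S => onChain σ S).card + (A.filter fun S => onChain σ S).card
        ≤ 1 + (A.filter fun S => onChain σ S ∧ onChain σ (f S)).card := by
    intro σ
    have hm1 : (M.filter fun S => onChain σ S).card ≤ 1 := by
      refine Finset.card_le_one.mpr fun a ha b hb => ?_
      simp only [Finset.mem_filter] at ha hb
      rcases onChain_total ha.2 hb.2 with h | h
      · exact hM.eq ha.1 hb.1 h
      · exact (hM.eq hb.1 ha.1 h).symm
    have ha1 : (A.filter fun S => onChain σ S).card ≤ 1 := by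
      refine Finset.card_le_one.mpr fun a ha b hb => ?_
      simp only [Finset.mem_filter] at ha hb
      rcases onChain_total ha.2 hb.2 with h | h
      · exact hA.eq ha.1 hb.1 h
      · exact (hA.eq hb.1 ha.1 h).symm
    by_cases hm : (M.filter fun S => onChain σ S).Nonempty
    · by_cases hae : (A.filter fun S => onChain σ S).Nonempty
      · obtain ⟨Sm, hSm⟩ := hm
        obtain ⟨Sa, hSa⟩ := hae
        simp only [Finset.mem_filter] at hSm hSa
        have hne : Sm ≠ Sa := fun h => (Finset.disjoint_left.mp hdisj hSm.1) (h ▸ hSa.1)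
        have hfa := hf Sa hSa.1
        have hsub : Sa ⊆ Sm := by
          rcases onChain_total hSm.2 hSa.2 with h | h
          · exfalso
            have h1 : Sm ⊆ f Sa := h.trans hfa.2.1.subset
            have h2 : Sm ≠ f Sa := by
              rintro rfl
              exact (hfa.2.1.not_subset) h
            exact hM hSm.1 hfa.1 h2 h1
          · exact h
        have hSmfa : Sm = f Sa := hfa.2.2 Sm hSm.1 (lt_of_le_of_ne hsub (Ne.symm hne))
        have hmem : Sa ∈ A.filter fun S => onChain σ S ∧ onChain σ (f S) := by
          refine Finset.mem_filter.mpr ⟨hSa.1, hSa.2, ?_⟩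
          rw [← hSmfa]; exact hSm.2
        have : 1 ≤ (A.filter fun S => onChain σ S ∧ onChain σ (f S)).card :=
          Finset.card_pos.mpr ⟨Sa, hmem⟩
        omega
      · have : (A.filter fun S => onChain σ S).card = 0 := by
          simpa [Finset.card_eq_zero, Finset.not_nonempty_iff_eq_empty] using hae
        omega
    · have : (M.filter fun S => onChain σ S).card = 0 := by
        simpa [Finset.card_eq_zero, Finset.not_nonempty_iff_eq_empty] using hm
      omega
  -- swap sums
  have swap1 : ∑ S ∈ M, S.card.factorial * (n - S.card).factorial
      = ∑ σ : Equiv.Perm (Fin n), (M.filter fun S => onChain σ S).card := by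
    calc ∑ S ∈ M, S.card.factorial * (n - S.card).factorial
        = ∑ S ∈ M, (Finset.univ.filter fun σ : Equiv.Perm (Fin n) => onChain σ S).card := by
          exact Finset.sum_congr rfl fun S _ => (count_single S).symm
      _ = ∑ σ : Equiv.Perm (Fin n), (M.filter fun S => onChain σ S).card := by
          simp only [Finset.card_filter]
          exact Finset.sum_comm
  have swap2 : ∑ S ∈ A, S.card.factorial * (n - S.card).factorial
      = ∑ σ : Equiv.Perm (Fin n), (A.filter fun S => onChain σ S).card := by
    calc ∑ S ∈ A, S.card.factorial * (n - S.card).factorial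
        = ∑ S ∈ A, (Finset.univ.filter fun σ : Equiv.Perm (Fin n) => onChain σ S).card := by
          exact Finset.sum_congr rfl fun S _ => (count_single S).symm
      _ = ∑ σ : Equiv.Perm (Fin n), (A.filter fun S => onChain σ S).card := by
          simp only [Finset.card_filter]
          exact Finset.sum_comm
  have swap3 : ∑ S ∈ A, S.card.factorial * ((f S).card - S.card).factorial
        * (n - (f S).card).factorial
      = ∑ σ : Equiv.Perm (Fin n), (A.filter fun S => onChain σ S ∧ onChain σ (f S)).card := by
    calc ∑ S ∈ A, S.card.factorial * ((f S).card - S.card).factorial * (n - (f S).card).factorial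
        = ∑ S ∈ A, (Finset.univ.filter
            fun σ : Equiv.Perm (Fin n) => onChain σ S ∧ onChain σ (f S)).card := by
          refine Finset.sum_congr rfl fun S hS => ?_
          rw [count_pair S (f S) (hf S hS).2.1.subset, mul_assoc]
      _ = ∑ σ : Equiv.Perm (Fin n), (A.filter fun S => onChain σ S ∧ onChain σ (f S)).card := by
          simp only [Finset.card_filter]
          exact Finset.sum_comm
  rw [swap1, swap2, swap3, ← Finset.sum_add_distrib]
  have hcard : ∑ _σ : Equiv.Perm (Fin n), 1 = n.factorial := by
    simp [Fintype.card_perm]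
  calc ∑ σ : Equiv.Perm (Fin n),
        ((M.filter fun S => onChain σ S).card + (A.filter fun S => onChain σ S).card)
      ≤ ∑ σ : Equiv.Perm (Fin n),
        (1 + (A.filter fun S => onChain σ S ∧ onChain σ (f S)).card) :=
        Finset.sum_le_sum fun σ _ => key σ
    _ = n.factorial
        + ∑ σ : Equiv.Perm (Fin n), (A.filter fun S => onChain σ S ∧ onChain σ (f S)).card := by
        rw [Finset.sum_add_distrib, hcard]
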